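/- Suppose L_1(0,ξ) = Σ_l ξ_l A_l has kernel of dimension m for every ξ ∈ ℝ^d \ {0}, and there exists ξ ≠ 0 with Ker L_1(0,ξ) ≠ ∩_{j : ξ_j ≠ 0} Ker A_j. Then the geometric multiplicity of the eigenvalue 0 of the split symbol L̃_1(0,ξ) is strictly smaller than its algebraic multiplicity N(d-1) + m; in particular L̃_1(0,ξ) is not diagonalizable. -/

import Mathlib

open Matrix Polynomial Module

private lemma aux_sum_mulVec {ι n m : Type*} [Fintype n] (s : Finset ι)
    (f : ι → Matrix m n ℂ) (x : n → ℂ) :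
    (∑ i ∈ s, f i).mulVec x = ∑ i ∈ s, (f i).mulVec x := by
  classical
  induction s using Finset.induction with
  | empty => simp
  | insert _ _ h ih => simp [Finset.sum_insert h, Matrix.add_mulVec, ih]

private lemma aux_eval_charpoly {n : Type*} [Fintype n] [DecidableEq n]
    (M : Matrix n n ℂ) (r : ℂ) :
    (M.charpoly).eval r = (r • (1 : Matrix n n ℂ) - M).det := by
  rw [Matrix.charpoly, eval_det, Matrix.matPolyEquiv_charmatrix]
  rw [Polynomial.eval_sub, Polynomial.eval_X, Polynomial.eval_C]
  congr 1
  ext i j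
  by_cases h : i = j <;>
    simp [Matrix.scalar_apply, Matrix.diagonal, Matrix.one_apply, h]

private lemma aux_charpoly_mulVecLin {ι : Type*} [Fintype ι] [DecidableEq ι]
    (M : Matrix ι ι ℂ) :
    LinearMap.charpoly (M.mulVecLin) = M.charpoly := by
  rw [← LinearMap.charpoly_toMatrix M.mulVecLin (Pi.basisFun ℂ ι)]
  have h : (LinearMap.toMatrix (Pi.basisFun ℂ ι) (Pi.basisFun ℂ ι)) M.mulVecLin = M := by
    rw [LinearMap.toMatrix_eq_toMatrix', ← Matrix.toLin'_apply', LinearMap.toMatrix'_toLin']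
  rw [h]

private lemma aux_mulVecLin_pow {ι : Type*} [Fintype ι] [DecidableEq ι]
    (M : Matrix ι ι ℂ) (k : ℕ) :
    (M.mulVecLin) ^ k = (M ^ k).mulVecLin := by
  induction k with
  | zero => simp [Matrix.mulVecLin_one, Module.End.one_eq_id]
  | succ k ih => rw [pow_succ, pow_succ, Matrix.mulVecLin_mul, ih]; rfl

/-- If `dim Ker L₁(0,ξ) = m` for all real `ξ ≠ 0` and for some `ξ ≠ 0` one has
`Ker L₁(0,ξ) ≠ ∩ⱼ Ker(ξⱼAⱼ)`, then the geometric multiplicity of the eigenvalue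
`0` of the split symbol `L̃₁(0,ξ)` is strictly less than its algebraic
multiplicity `N(d-1)+m`; in particular `L̃₁(0,ξ)` is not diagonalizable. -/
theorem berenger_not_diagonalizable (N d m : ℕ)
    (A : Fin d → Matrix (Fin N) (Fin N) ℂ)
    (hm : ∀ ξ : Fin d → ℝ, ξ ≠ 0 →
      Module.finrank ℂ (LinearMap.ker (∑ l, (ξ l : ℂ) • A l).mulVecLin) = m)
    (ξ : Fin d → ℝ) (hξ : ξ ≠ 0)
    (hne : LinearMap.ker (∑ l, (ξ l : ℂ) • A l).mulVecLin ≠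
      ⨅ j, LinearMap.ker ((ξ j : ℂ) • A j).mulVecLin) :
    Module.finrank ℂ (LinearMap.ker
        (Matrix.of fun p q : Fin d × Fin N =>
          (ξ p.1 : ℂ) * A p.1 p.2 q.2).mulVecLin) < N * (d - 1) + m
    ∧ ¬ ∃ (P D : Matrix (Fin d × Fin N) (Fin d × Fin N) ℂ),
        IsUnit P.det ∧ D.IsDiag ∧
        (Matrix.of fun p q : Fin d × Fin N =>
          (ξ p.1 : ℂ) * A p.1 p.2 q.2) = P * D * P⁻¹ := by
  classical
  have hd : 0 < d := by
    rcases Nat.eq_zero_or_pos d with h | h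
    · subst h; exact absurd (funext fun i => (i : Fin 0).elim0) hξ
    · exact h
  set ML : Matrix (Fin N) (Fin N) ℂ := ∑ l, (ξ l : ℂ) • A l with hML
  set B : Matrix (Fin d × Fin N) (Fin d × Fin N) ℂ :=
    Matrix.of (fun p q : Fin d × Fin N => (ξ p.1 : ℂ) * A p.1 p.2 q.2) with hB
  set K : Submodule ℂ (Fin N → ℂ) :=
    ⨅ j, LinearMap.ker ((ξ j : ℂ) • A j).mulVecLin with hK
  -- the summation map
  set σ : (Fin d × Fin N → ℂ) →ₗ[ℂ] (Fin N → ℂ) :=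
    { toFun := fun Φ q => ∑ j, Φ (j, q)
      map_add' := fun Φ Ψ => by funext q; simp [Finset.sum_add_distrib]
      map_smul' := fun c Φ => by funext q; simp [Finset.mul_sum] } with hσ
  have hσapp : ∀ (Φ : Fin d × Fin N → ℂ) (q : Fin N), σ Φ q = ∑ j, Φ (j, q) :=
    fun _ _ => rfl
  have hσsurj : Function.Surjective σ := by
    intro y
    refine ⟨fun p => if p.1 = (⟨0, hd⟩ : Fin d) then y p.2 else 0, ?_⟩
    funext q
    rw [hσapp]
    simp
  have hBmul : ∀ (Φ : Fin d × Fin N → ℂ) (p : Fin d × Fin N),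
      B.mulVec Φ p = ((ξ p.1 : ℂ) • A p.1).mulVec (σ Φ) p.2 := by
    intro Φ p
    have : B.mulVec Φ p = ∑ q : Fin d × Fin N, ((ξ p.1 : ℂ) * A p.1 p.2 q.2) * Φ q := by
      simp [Matrix.mulVec, dotProduct, hB]
    rw [this, Fintype.sum_prod_type]
    rw [Finset.sum_comm]
    have : ((ξ p.1 : ℂ) • A p.1).mulVec (σ Φ) p.2
        = ∑ r : Fin N, ((ξ p.1 : ℂ) * A p.1 p.2 r) * ∑ j, Φ (j, r) := by
      simp [Matrix.mulVec, dotProduct, hσapp]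
    rw [this]
    exact Finset.sum_congr rfl fun r _ => by rw [Finset.mul_sum]
  have hkerB : LinearMap.ker B.mulVecLin = K.comap σ := by
    ext Φ
    simp only [LinearMap.mem_ker, Submodule.mem_comap, hK, Submodule.mem_iInf,
      LinearMap.mem_ker]
    constructor
    · intro h j
      rw [Matrix.mulVecLin_apply]
      funext i
      have := congrFun h (j, i)
      rw [Matrix.mulVecLin_apply] at this
      rw [hBmul] at this
      simpa using this
    · intro h
      rw [Matrix.mulVecLin_apply]
      funext p
      rw [hBmul]
      have := h p.1
      rw [Matrix.mulVecLin_apply] at this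
      rw [this]
      rfl
  -- dimension of the kernel of B
  have hKfin : Module.finrank ℂ (LinearMap.ker B.mulVecLin)
      = N * (d - 1) + Module.finrank ℂ K := by
    have h1 : K.comap σ = LinearMap.ker (K.mkQ ∘ₗ σ) := by
      rw [LinearMap.ker_comp, Submodule.ker_mkQ]
    have h2 : LinearMap.range (K.mkQ ∘ₗ σ) = ⊤ := by
      rw [LinearMap.range_comp, LinearMap.range_eq_top.mpr hσsurj, Submodule.map_top,
        Submodule.range_mkQ]
    have h3 := LinearMap.finrank_range_add_finrank_ker (K.mkQ ∘ₗ σ)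
    rw [h2] at h3
    have h4 := Submodule.finrank_quotient_add_finrank K
    have hdom : Module.finrank ℂ (Fin d × Fin N → ℂ) = d * N := by
      rw [Module.finrank_pi]
      simp
    have htop : Module.finrank ℂ (⊤ : Submodule ℂ ((Fin N → ℂ) ⧸ K))
        = Module.finrank ℂ ((Fin N → ℂ) ⧸ K) := finrank_top ℂ _
    rw [htop, hdom] at h3
    rw [hkerB, h1]
    have h5 : Module.finrank ℂ (Fin N → ℂ) = N := by
      rw [Module.finrank_pi]; simp
    rw [h5] at h4
    have hmul : N * (d - 1) + N = d * N := by
      have hdd : d - 1 + 1 = d := Nat.succ_pred_eq_of_pos hd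
      calc N * (d - 1) + N = N * ((d - 1) + 1) := by ring
        _ = N * d := by rw [hdd]
        _ = d * N := by ring
    set t := N * (d - 1)
    omega
  -- K is strictly contained in ker L₁(0,ξ)
  have hKle : K ≤ LinearMap.ker ML.mulVecLin := by
    intro x hx
    simp only [hK, Submodule.mem_iInf, LinearMap.mem_ker] at hx
    simp only [LinearMap.mem_ker, Matrix.mulVecLin_apply]
    rw [hML, aux_sum_mulVec]
    refine Finset.sum_eq_zero fun l _ => ?_
    have := hx l
    rw [Matrix.mulVecLin_apply] at this
    exact this
  have hKlt : Module.finrank ℂ K < m := by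
    have : K < LinearMap.ker ML.mulVecLin :=
      lt_of_le_of_ne hKle (fun h => hne h.symm)
    have := Submodule.finrank_lt_finrank_of_lt this
    rw [hm ξ hξ] at this
    exact this
  have part1 : Module.finrank ℂ (LinearMap.ker B.mulVecLin) < N * (d - 1) + m := by
    rw [hKfin]
    exact Nat.add_lt_add_left hKlt _
  refine ⟨part1, ?_⟩
  -- the factorization B = C * R
  set Cm : Matrix (Fin d × Fin N) (Fin N) ℂ :=
    Matrix.of (fun p q => (ξ p.1 : ℂ) * A p.1 p.2 q) with hCm
  set Rm : Matrix (Fin N) (Fin d × Fin N) ℂ :=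
    Matrix.of (fun q p => if q = p.2 then (1 : ℂ) else 0) with hRm
  have hCR : B = Cm * Rm := by
    ext p q
    rw [Matrix.mul_apply]
    simp only [hB, hCm, hRm, Matrix.of_apply, mul_ite, mul_one, mul_zero]
    rw [Finset.sum_ite_eq' Finset.univ q.2 (fun r => (ξ p.1 : ℂ) * A p.1 p.2 r)]
    simp
  have hRC : Rm * Cm = ML := by
    ext q q'
    rw [Matrix.mul_apply, hML]
    simp only [hCm, hRm, Matrix.of_apply, ite_mul, one_mul, zero_mul]
    rw [Fintype.sum_prod_type_right]
    simp only [Finset.sum_ite_eq' Finset.univ]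
    simp [Matrix.sum_apply, Matrix.smul_apply]
  -- the characteristic polynomial identity
  have hcp : B.charpoly = X ^ (N * (d - 1)) * ML.charpoly := by
    rw [← sub_eq_zero]
    apply Polynomial.eq_zero_of_infinite_isRoot
    apply Set.Infinite.mono (s := {x : ℂ | x ≠ 0})
    swap
    · exact Set.Finite.infinite_compl (Set.finite_singleton 0)
    intro τ hτ
    have hτ' : (τ : ℂ) ≠ 0 := hτ
    simp only [Set.mem_setOf_eq, Polynomial.IsRoot, Polynomial.eval_sub,
      Polynomial.eval_mul, Polynomial.eval_pow, Polynomial.eval_X, sub_eq_zero]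
    have h1 : τ • ((1 : Matrix (Fin d × Fin N) (Fin d × Fin N) ℂ)
        + ((-τ⁻¹) • Cm) * Rm) = τ • 1 - B := by
      rw [hCR, Matrix.smul_mul, smul_add, smul_smul, mul_neg, mul_inv_cancel₀ hτ',
        neg_smul, one_smul, ← sub_eq_add_neg]
    have h2 : τ • ((1 : Matrix (Fin N) (Fin N) ℂ) + (-τ⁻¹) • ML) = τ • 1 - ML := by
      rw [smul_add, smul_smul, mul_neg, mul_inv_cancel₀ hτ', neg_smul, one_smul,
        ← sub_eq_add_neg]
    have e1 : (B.charpoly).eval τ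
        = τ ^ (d * N) * ((1 : Matrix (Fin N) (Fin N) ℂ) + (-τ⁻¹) • ML).det := by
      rw [aux_eval_charpoly, ← h1, Matrix.det_smul, Matrix.det_one_add_mul_comm,
        Matrix.mul_smul, hRC, show Fintype.card (Fin d × Fin N) = d * N by simp]
    have e2 : (ML.charpoly).eval τ
        = τ ^ N * ((1 : Matrix (Fin N) (Fin N) ℂ) + (-τ⁻¹) • ML).det := by
      rw [aux_eval_charpoly, ← h2, Matrix.det_smul, show Fintype.card (Fin N) = N by simp]
    rw [e1, e2]
    rw [← mul_assoc, ← pow_add]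
    congr 2
    have hdd : d - 1 + 1 = d := Nat.succ_pred_eq_of_pos hd
    calc d * N = N * ((d - 1) + 1) := by rw [hdd]; ring
      _ = N * (d - 1) + N := by ring
  -- trailing degrees
  have hntB : natTrailingDegree B.charpoly
      = N * (d - 1) + natTrailingDegree ML.charpoly := by
    rw [hcp, Polynomial.natTrailingDegree_mul (pow_ne_zero _ Polynomial.X_ne_zero)
      (Matrix.charpoly_monic ML).ne_zero, Polynomial.natTrailingDegree_X_pow]
  have hmle : m ≤ natTrailingDegree ML.charpoly := by
    have e1 : LinearMap.ker ML.mulVecLin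
        ≤ Module.End.maxGenEigenspace ML.mulVecLin 0 := by
      rw [← Module.End.eigenspace_zero]
      exact (Module.End.genEigenspace ML.mulVecLin 0).monotone le_top
    have e2 := LinearMap.finrank_maxGenEigenspace_zero_eq (ML.mulVecLin)
    rw [aux_charpoly_mulVecLin] at e2
    calc m = Module.finrank ℂ (LinearMap.ker ML.mulVecLin) := (hm ξ hξ).symm
      _ ≤ Module.finrank ℂ (Module.End.maxGenEigenspace ML.mulVecLin 0) :=
        Submodule.finrank_mono e1
      _ = natTrailingDegree ML.charpoly := e2
  -- now the diagonalizability part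
  rintro ⟨P, D, hP, hD, hBP⟩
  obtain ⟨U, hU⟩ := (Matrix.isUnit_iff_isUnit_det P).mpr hP
  set Uu : Matrix (Fin d × Fin N) (Fin d × Fin N) ℂ := ↑U with hUu
  set Vu : Matrix (Fin d × Fin N) (Fin d × Fin N) ℂ := ↑(U⁻¹) with hVu
  have hUV : Uu * Vu = 1 := U.mul_inv
  have hVU : Vu * Uu = 1 := U.inv_mul
  have hBU : B = Uu * D * Vu := by
    rw [hBP, ← hU, hVu, Matrix.coe_units_inv, hUu]
  have hDdiag : Matrix.diagonal D.diag = D := hD.diagonal_diag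
  set v := D.diag with hv
  have hBpow : ∀ k : ℕ, B ^ k = Uu * D ^ k * Vu := by
    intro k
    induction k with
    | zero => simp [pow_zero, hUV]
    | succ k ih =>
      rw [pow_succ, ih, hBU, pow_succ]
      simp only [mul_assoc]
      rw [← mul_assoc Vu Uu, hVU, one_mul]
  have hker : Module.End.maxGenEigenspace B.mulVecLin 0 = LinearMap.ker B.mulVecLin := by
    apply le_antisymm
    · intro x hx
      rw [Module.End.mem_maxGenEigenspace] at hx
      obtain ⟨k, hk⟩ := hx
      simp only [zero_smul, sub_zero] at hk
      rw [aux_mulVecLin_pow, Matrix.mulVecLin_apply, hBpow k] at hk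
      set y := Vu.mulVec x with hy
      have hDky : (D ^ k).mulVec y = 0 := by
        have h9 := congrArg (fun z => Vu.mulVec z) hk
        simp only [Matrix.mulVec_mulVec, Matrix.mulVec_zero] at h9
        rw [show Vu * (Uu * D ^ k * Vu) = D ^ k * Vu by
          simp only [mul_assoc]
          rw [← mul_assoc Vu Uu, hVU, one_mul]] at h9
        rw [hy, Matrix.mulVec_mulVec]
        exact h9
      have hDy : D.mulVec y = 0 := by
        funext i
        have hi := congrFun hDky i
        rw [← hDdiag, Matrix.diagonal_pow, Matrix.mulVec_diagonal] at hi
        rw [← hDdiag, Matrix.mulVec_diagonal]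
        simp only [Pi.zero_apply] at hi ⊢
        by_cases hvi : v i = 0
        · simp [hvi]
        · have hpow : v i ^ k ≠ 0 := pow_ne_zero _ hvi
          rw [Pi.pow_apply] at hi
          rcases mul_eq_zero.mp hi with h | h
          · exact absurd h hpow
          · rw [h, mul_zero]
      rw [LinearMap.mem_ker, Matrix.mulVecLin_apply, hBU]
      rw [← Matrix.mulVec_mulVec, ← Matrix.mulVec_mulVec, ← hy, hDy, Matrix.mulVec_zero]
    · intro x hx
      rw [Module.End.mem_maxGenEigenspace]
      refine ⟨1, ?_⟩
      simp only [zero_smul, sub_zero, pow_one]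
      exact hx
  have hfin := LinearMap.finrank_maxGenEigenspace_zero_eq B.mulVecLin
  rw [hker, aux_charpoly_mulVecLin] at hfin
  have : N * (d - 1) + m ≤ Module.finrank ℂ (LinearMap.ker B.mulVecLin) := by
    rw [hfin, hntB]
    exact Nat.add_le_add_left hmle _
  omega
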